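/- Let a, b, c ≥ 0, let α_1, …, α_{b+c} be pairwise distinct complex numbers, let β_1, …, β_{a+c}, γ_1, …, γ_{a+b} be complex numbers, and let R > 0 satisfy |α_i| < R for all i and |β_j| > R for all j. Then Φ_{a,b,c}(α; β; γ) = (−1)^{c(c−1)/2} · (1/c!) · ∏_{i=1}^{b+c} ∏_{j=1}^{a+c} (α_i − β_j) · (1/(2πi))^c ∮_{|z_1|=R} ⋯ ∮_{|z_c|=R} ∏_{1 ≤ i < j ≤ c} (z_i − z_j)^2 · ∏_{ℓ=1}^{c} [ ∏_{k=1}^{a+b} (z_ℓ − γ_k) ] / [ ∏_{j=1}^{a+c} (z_ℓ − β_j) · ∏_{i=1}^{b+c} (z_ℓ − α_i) ] dz_c ⋯ dz_1, where each contour is the circle of radius R traversed once counterclockwise. (This is the multiple-contour-integral representation, Eq. (2.7) of the paper, with the sign fixed by the explicit definition of Φ.) -/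

import Mathlib

/-- Eq. (2.6) of the paper: the explicit formula for the component of the O(1) loop model
ground state corresponding to three series of nested arches of sizes `a`, `b`, `c`. -/
noncomputable def Phi (a b c : ℕ) (α : Fin (b + c) → ℂ) (β : Fin (a + c) → ℂ)
    (γ : Fin (a + b) → ℂ) : ℂ :=
  ∑ I ∈ Finset.powersetCard c (Finset.univ : Finset (Fin (b + c))),
    ((∏ i ∈ Iᶜ, ∏ j, (α i - β j)) * ∏ i ∈ I, ∏ k, (α i - γ k)) /
      ∏ i ∈ I, ∏ j ∈ Iᶜ, (α i - α j)

/-- The `n`-fold iterated contour integral `∮ ⋯ ∮ f(z_1, …, z_n) dz_n ⋯ dz_1`, each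
contour being the circle of radius `R` centered at `0` traversed once counterclockwise
(the outermost integral is over the first variable). -/
noncomputable def iteratedCircleIntegral : (n : ℕ) → ((Fin n → ℂ) → ℂ) → ℝ → ℂ
  | 0, f, _ => f ![]
  | n + 1, f, R =>
      ∮ z in C(0, R), iteratedCircleIntegral n (fun w => f (Fin.cons z w)) R

namespace PhiContourAux

open Finset Complex Metric

lemma lagrange_pf {m : ℕ} (hm : 0 < m) (A : Fin m → ℂ) (hA : Function.Injective A)
    {z : ℂ} (hz : ∀ i, z ≠ A i) :
    (∏ i, (z - A i))⁻¹ =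
      ∑ i, (∏ i' ∈ Finset.univ.erase i, (A i - A i'))⁻¹ * (z - A i)⁻¹ := by
  haveI : Nonempty (Fin m) := Fin.pos_iff_nonempty.mp hm
  have h1 := Lagrange.sum_basis (s := (univ : Finset (Fin m))) (v := A) hA.injOn univ_nonempty
  have h2 := congrArg (Polynomial.eval z) h1
  simp only [Polynomial.eval_finset_sum, Lagrange.basis, Polynomial.eval_prod,
    Lagrange.basisDivisor, Polynomial.eval_mul, Polynomial.eval_C, Polynomial.eval_sub,
    Polynomial.eval_X, Polynomial.eval_one] at h2
  calc (∏ i, (z - A i))⁻¹ = (∏ i, (z - A i))⁻¹ * ∑ i, ∏ j ∈ univ.erase i, ((A i - A j)⁻¹ * (z - A j)) := by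
        rw [h2, mul_one]
    _ = _ := by
        rw [Finset.mul_sum]
        refine Finset.sum_congr rfl fun i _ => ?_
        have hsplit : (∏ i', (z - A i')) = (z - A i) * ∏ j ∈ univ.erase i, (z - A j) :=
          (Finset.mul_prod_erase univ _ (mem_univ i)).symm
        have hP : (∏ j ∈ univ.erase i, (z - A j)) ≠ 0 :=
          Finset.prod_ne_zero_iff.mpr fun j _ => sub_ne_zero.mpr (hz j)
        rw [hsplit, Finset.prod_mul_distrib, mul_inv]
        rw [Finset.prod_inv_distrib,
          show (z - A i)⁻¹ * (∏ j ∈ univ.erase i, (z - A j))⁻¹ *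
              ((∏ x ∈ univ.erase i, (A i - A x))⁻¹ * ∏ x ∈ univ.erase i, (z - A x)) =
            ((∏ i' ∈ univ.erase i, (A i - A i'))⁻¹ * (z - A i)⁻¹) *
              ((∏ j ∈ univ.erase i, (z - A j))⁻¹ * ∏ j ∈ univ.erase i, (z - A j)) from by ring,
          inv_mul_cancel₀ hP, mul_one]

lemma circleIntegral_finset_sum {ι : Type*} (s : Finset ι) (f : ι → ℂ → ℂ) {c : ℂ} {R : ℝ}
    (h : ∀ i ∈ s, CircleIntegrable (f i) c R) :
    (∮ z in C(c, R), ∑ i ∈ s, f i z) = ∑ i ∈ s, ∮ z in C(c, R), f i z := by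
  simp only [circleIntegral, smul_sum]
  exact intervalIntegral.integral_finset_sum fun i hi => (h i hi).out

lemma circleIntegral_div_prod {m : ℕ} (hm : 0 < m) (A : Fin m → ℂ) (hA : Function.Injective A)
    {R : ℝ} (hR : 0 < R) (hAR : ∀ i, ‖A i‖ < R) {g : ℂ → ℂ}
    (hg : DiffContOnCl ℂ g (ball (0:ℂ) R)) :
    (∮ z in C(0, R), g z / ∏ i, (z - A i)) =
      (2 * Real.pi * Complex.I) * ∑ i, g (A i) / ∏ i' ∈ Finset.univ.erase i, (A i - A i') := by
  have hzA : ∀ z ∈ sphere (0:ℂ) R, ∀ i, z ≠ A i := by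
    intro z hz i h
    rw [mem_sphere_zero_iff_norm] at hz
    rw [h] at hz
    exact (hAR i).ne (by simpa using hz)
  have hgc : ContinuousOn g (sphere (0:ℂ) R) := by
    refine hg.continuousOn.mono ?_
    rw [closure_ball (0:ℂ) hR.ne']
    exact sphere_subset_closedBall
  have key : Set.EqOn (fun z => g z / ∏ i, (z - A i))
      (fun z => ∑ i, (∏ i' ∈ Finset.univ.erase i, (A i - A i'))⁻¹ * ((z - A i)⁻¹ * g z))
      (sphere (0:ℂ) R) := by
    intro z hz
    simp only
    rw [div_eq_mul_inv, lagrange_pf hm A hA (hzA z hz), Finset.mul_sum]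
    exact Finset.sum_congr rfl fun i _ => by ring
  rw [circleIntegral.integral_congr hR.le key]
  have hint : ∀ i : Fin m, CircleIntegrable
      (fun z => (∏ i' ∈ Finset.univ.erase i, (A i - A i'))⁻¹ * ((z - A i)⁻¹ * g z)) 0 R := by
    intro i
    refine (ContinuousOn.circleIntegrable hR.le ?_)
    refine continuousOn_const.mul (ContinuousOn.mul ?_ hgc)
    exact ((continuousOn_id.sub continuousOn_const).inv₀
      fun z hz => sub_ne_zero.mpr (hzA z hz i))
  rw [circleIntegral_finset_sum _ _ (fun i _ => hint i), Finset.mul_sum]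
  refine Finset.sum_congr rfl fun i _ => ?_
  rw [circleIntegral.integral_const_mul]
  have hb : A i ∈ ball (0:ℂ) R := by simpa [mem_ball_zero_iff] using hAR i
  have := hg.circleIntegral_sub_inv_smul hb
  simp only [smul_eq_mul] at this
  rw [this, div_eq_mul_inv]
  ring

lemma iterated_succ (n : ℕ) (f : (Fin (n+1) → ℂ) → ℂ) (R : ℝ) :
    iteratedCircleIntegral (n+1) f R
      = ∮ z in C(0, R), iteratedCircleIntegral n (fun w => f (Fin.cons z w)) R := rfl

lemma iterated_const_mul : ∀ (n : ℕ) (a : ℂ) (f : (Fin n → ℂ) → ℂ) (R : ℝ),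
    iteratedCircleIntegral n (fun w => a * f w) R = a * iteratedCircleIntegral n f R
  | 0, a, f, R => rfl
  | n + 1, a, f, R => by
    show (∮ z in C(0, R), iteratedCircleIntegral n (fun w => a * f (Fin.cons z w)) R) = _
    rw [show (fun z => iteratedCircleIntegral n (fun w => a * f (Fin.cons z w)) R)
        = (fun z => a * iteratedCircleIntegral n (fun w => f (Fin.cons z w)) R) from
      funext fun z => iterated_const_mul n a _ R]
    rw [circleIntegral.integral_const_mul]
    rfl

lemma prod_filter_rel {n : ℕ} (r : Fin n → Fin n → Prop) [DecidableRel r] (f : Fin n → Fin n → ℂ) :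
    ∏ p ∈ univ.filter (fun p : Fin n × Fin n => r p.1 p.2), f p.1 p.2 =
      ∏ i, ∏ j ∈ univ.filter (fun j => r i j), f i j := by
  rw [Finset.prod_filter, ← Finset.univ_product_univ,
    Finset.prod_product' (f := fun i j => if r i j then f i j else 1)]
  exact Finset.prod_congr rfl fun i _ => (Finset.prod_filter _ _).symm

lemma Ioi_eq_filter {n : ℕ} (i : Fin n) : Finset.Ioi i = univ.filter (fun j => i < j) := by
  ext j; simp

lemma Iio_eq_filter {n : ℕ} (i : Fin n) : Finset.Iio i = univ.filter (fun j => j < i) := by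
  ext j; simp

lemma filter_pair_prod {n : ℕ} (f : Fin n → Fin n → ℂ) :
    ∏ p ∈ univ.filter (fun p : Fin n × Fin n => p.1 < p.2), f p.1 p.2 =
      ∏ i, ∏ j ∈ Finset.Ioi i, f i j := by
  rw [prod_filter_rel (· < ·)]
  exact Finset.prod_congr rfl fun i _ => by rw [Ioi_eq_filter]

lemma pair_cons {n : ℕ} (x : Fin (n + 1) → ℂ) :
    (∏ i, ∏ j ∈ Finset.Ioi i, (x i - x j) ^ 2) =
      (∏ ℓ : Fin n, (x 0 - x ℓ.succ) ^ 2) *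
        ∏ i : Fin n, ∏ j ∈ Finset.Ioi i, (x (Fin.succ i) - x (Fin.succ j)) ^ 2 := by
  rw [Fin.prod_univ_succ, Fin.prod_Ioi_zero]
  exact congrArg _ (Finset.prod_congr rfl fun i _ => Fin.prod_Ioi_succ (fun j => (x i.succ - x j) ^ 2) i)

lemma swap_pairs {n : ℕ} (F : Fin n → Fin n → ℂ) :
    ∏ p, ∏ q ∈ Finset.Iio p, F p q = ∏ p, ∏ q ∈ Finset.Ioi p, F q p := by
  have h1 : ∏ p, ∏ q ∈ Finset.Iio p, F p q =
      ∏ pr ∈ univ.filter (fun pr : Fin n × Fin n => pr.2 < pr.1), F pr.1 pr.2 := by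
    rw [prod_filter_rel (fun a b => b < a) F]
    exact Finset.prod_congr rfl fun i _ => by rw [Iio_eq_filter]
  have h2 : ∏ p, ∏ q ∈ Finset.Ioi p, F q p =
      ∏ pr ∈ univ.filter (fun pr : Fin n × Fin n => pr.1 < pr.2), F pr.2 pr.1 := by
    rw [prod_filter_rel (fun a b => a < b) (fun i j => F j i)]
    exact Finset.prod_congr rfl fun i _ => by rw [Ioi_eq_filter]
  rw [h1, h2]
  refine Finset.prod_nbij' (fun p => p.swap) (fun p => p.swap) ?_ ?_ ?_ ?_ ?_ <;>
    simp [Prod.swap]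

lemma erase_pair_prod {n : ℕ} (x : Fin n → ℂ) :
    (∏ p, ∏ q ∈ Finset.univ.erase p, (x p - x q)) =
      (-1) ^ (n * (n - 1) / 2) * ∏ i, ∏ j ∈ Finset.Ioi i, (x i - x j) ^ 2 := by
  have herase : ∀ p : Fin n, Finset.univ.erase p = Finset.Iio p ∪ Finset.Ioi p := by
    intro p; ext q
    simp only [Finset.mem_erase, Finset.mem_union, Finset.mem_Iio, Finset.mem_Ioi,
      Finset.mem_univ, and_true, ne_iff_lt_or_gt]
  have hdisj : ∀ p : Fin n, Disjoint (Finset.Iio p) (Finset.Ioi p) := by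
    intro p
    simp [Finset.disjoint_left]
    intro q hq; exact le_of_lt hq
  calc (∏ p, ∏ q ∈ Finset.univ.erase p, (x p - x q))
      = ∏ p, ((∏ q ∈ Finset.Iio p, (x p - x q)) * ∏ q ∈ Finset.Ioi p, (x p - x q)) := by
        exact Finset.prod_congr rfl fun p _ => by rw [herase p, Finset.prod_union (hdisj p)]
    _ = (∏ p, ∏ q ∈ Finset.Iio p, (x p - x q)) * ∏ p, ∏ q ∈ Finset.Ioi p, (x p - x q) := by
        rw [Finset.prod_mul_distrib]
    _ = ∏ p, ∏ q ∈ Finset.Ioi p, ((x q - x p) * (x p - x q)) := by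
        rw [swap_pairs (fun p q => x p - x q), ← Finset.prod_mul_distrib]
        exact Finset.prod_congr rfl fun p _ => by rw [← Finset.prod_mul_distrib]
    _ = ∏ p, ∏ q ∈ Finset.Ioi p, ((-1) * (x p - x q) ^ 2) := by
        exact Finset.prod_congr rfl fun p _ => Finset.prod_congr rfl fun q _ => by ring
    _ = (∏ p : Fin n, (-1 : ℂ) ^ (Finset.Ioi p).card) *
          ∏ i, ∏ j ∈ Finset.Ioi i, (x i - x j) ^ 2 := by
        rw [← Finset.prod_mul_distrib]
        exact Finset.prod_congr rfl fun p _ => by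
          rw [Finset.prod_mul_distrib, Finset.prod_const]
    _ = (-1) ^ (n * (n - 1) / 2) * ∏ i, ∏ j ∈ Finset.Ioi i, (x i - x j) ^ 2 := by
        congr 1
        rw [Finset.prod_pow_eq_pow_sum]
        congr 1
        have : ∀ p : Fin n, (Finset.Ioi p).card = n - 1 - (p : ℕ) := fun p => Fin.card_Ioi p
        simp only [this]
        rw [Fin.sum_univ_eq_sum_range (fun i => n - 1 - i)]
        rw [Finset.sum_range_reflect (fun i => i) n]
        exact Finset.sum_range_id n

lemma diffContOnCl_mul {f g : ℂ → ℂ} {s : Set ℂ} (hf : DiffContOnCl ℂ f s)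
    (hg : DiffContOnCl ℂ g s) : DiffContOnCl ℂ (fun z => f z * g z) s :=
  ⟨hf.differentiableOn.mul hg.differentiableOn, hf.continuousOn.mul hg.continuousOn⟩

lemma fiber_card {m c : ℕ} (I : Finset (Fin m)) (hI : I.card = c) :
    ((Finset.univ : Finset (Fin c → Fin m)).filter
        (fun σ => Function.Injective σ ∧ Finset.image σ Finset.univ = I)).card
      = c.factorial := by
  have hcard : Fintype.card {x // x ∈ I} = c := by rw [Fintype.card_coe, hI]
  have e₀ : Fin c ≃ {x // x ∈ I} := (Fintype.equivFinOfCardEq hcard).symm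
  have himg : (Finset.univ : Finset (Fin c → Fin m)).filter
        (fun σ => Function.Injective σ ∧ Finset.image σ Finset.univ = I)
      = Finset.image (fun e : Fin c ≃ {x // x ∈ I} => fun p => (e p : Fin m)) Finset.univ := by
    ext σ
    simp only [Finset.mem_filter, Finset.mem_univ, true_and, Finset.mem_image]
    constructor
    · rintro ⟨hinj, hIeq⟩
      have hmem : ∀ p, σ p ∈ I := fun p => by
        rw [← hIeq]; exact Finset.mem_image_of_mem σ (Finset.mem_univ p)
      have hbij : Function.Bijective (fun p => (⟨σ p, hmem p⟩ : {x // x ∈ I})) := by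
        rw [Fintype.bijective_iff_injective_and_card]
        exact ⟨fun p q h => hinj (congrArg Subtype.val h), by rw [hcard, Fintype.card_fin]⟩
      exact ⟨Equiv.ofBijective _ hbij, rfl⟩
    · rintro ⟨e, rfl⟩
      refine ⟨fun p q h => e.injective (Subtype.ext h), ?_⟩
      ext x
      simp only [Finset.mem_image, Finset.mem_univ, true_and]
      constructor
      · rintro ⟨p, rfl⟩; exact (e p).2
      · intro hx
        exact ⟨e.symm ⟨x, hx⟩, by simp⟩
  rw [himg, Finset.card_image_of_injective _ ?_, Finset.card_univ, Fintype.card_equiv e₀,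
    Fintype.card_fin]
  intro e1 e2 h
  apply Equiv.ext
  intro p
  exact Subtype.ext (congrFun h p)

lemma sum_inj {m : ℕ} (c : ℕ) (A : Fin m → ℂ) (hA : Function.Injective A) (res : Fin m → ℂ) :
    ∑ σ : Fin c → Fin m,
        (∏ p, ∏ q ∈ Finset.Ioi p, (A (σ p) - A (σ q)) ^ 2) * ∏ ℓ, res (σ ℓ)
      = (c.factorial : ℂ) * ∑ I ∈ Finset.powersetCard c (Finset.univ : Finset (Fin m)),
          ((-1 : ℂ) ^ (c * (c - 1) / 2) * ∏ i ∈ I, ∏ j ∈ I.erase i, (A i - A j)) *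
            ∏ i ∈ I, res i := by
  have hsign : ((-1 : ℂ)) ^ (c * (c - 1) / 2) * ((-1 : ℂ)) ^ (c * (c - 1) / 2) = 1 := by
    rw [← pow_add]
    exact Even.neg_one_pow ⟨c * (c - 1) / 2, rfl⟩
  rw [← Finset.sum_filter_of_ne (p := fun σ : Fin c → Fin m => Function.Injective σ)
    (fun σ _ hσ => ?_)]
  swap
  · by_contra hinj
    apply hσ
    rw [Function.not_injective_iff] at hinj
    obtain ⟨p, q, hpq, hne⟩ := hinj
    have hzero : (∏ p, ∏ q ∈ Finset.Ioi p, (A (σ p) - A (σ q)) ^ 2) = 0 := by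
      rcases Ne.lt_or_gt hne with h | h
      · exact Finset.prod_eq_zero (Finset.mem_univ p)
          (Finset.prod_eq_zero (Finset.mem_Ioi.mpr h) (by rw [hpq, sub_self]; ring))
      · exact Finset.prod_eq_zero (Finset.mem_univ q)
          (Finset.prod_eq_zero (Finset.mem_Ioi.mpr h) (by rw [hpq, sub_self]; ring))
    rw [hzero, zero_mul]
  rw [← Finset.sum_fiberwise_of_maps_to (g := fun σ : Fin c → Fin m => Finset.image σ Finset.univ)
    (t := Finset.powersetCard c (Finset.univ : Finset (Fin m))) ?_ _]
  swap
  · intro σ hσ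
    rw [Finset.mem_filter] at hσ
    rw [Finset.mem_powersetCard_univ, Finset.card_image_of_injective _ hσ.2, Finset.card_univ,
      Fintype.card_fin]
  rw [Finset.mul_sum]
  refine Finset.sum_congr rfl fun I hI => ?_
  rw [Finset.mem_powersetCard_univ] at hI
  have hconst : ∀ σ ∈ (Finset.univ.filter (fun σ : Fin c → Fin m => Function.Injective σ)).filter
      (fun σ => Finset.image σ Finset.univ = I),
      (∏ p, ∏ q ∈ Finset.Ioi p, (A (σ p) - A (σ q)) ^ 2) * ∏ ℓ, res (σ ℓ)
        = ((-1 : ℂ) ^ (c * (c - 1) / 2) * ∏ i ∈ I, ∏ j ∈ I.erase i, (A i - A j)) *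
            ∏ i ∈ I, res i := by
    intro σ hσ
    simp only [Finset.mem_filter, Finset.mem_univ, true_and] at hσ
    obtain ⟨hinj, hIeq⟩ := hσ
    have hres : ∏ i ∈ I, res i = ∏ ℓ, res (σ ℓ) := by
      rw [← hIeq, Finset.prod_image (fun x _ y _ h => hinj h)]
    have hpair : ∏ i ∈ I, ∏ j ∈ I.erase i, (A i - A j)
        = ∏ p, ∏ q ∈ Finset.univ.erase p, (A (σ p) - A (σ q)) := by
      rw [← hIeq, Finset.prod_image (fun x _ y _ h => hinj h)]
      refine Finset.prod_congr rfl fun p _ => ?_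
      rw [← Finset.image_erase hinj, Finset.prod_image
        (fun x _ y _ h => hinj h)]
    rw [hres, hpair, erase_pair_prod (fun p => A (σ p)),
      ← mul_assoc (((-1 : ℂ)) ^ (c * (c - 1) / 2)), hsign, one_mul]
  rw [Finset.sum_congr rfl hconst, Finset.sum_const, nsmul_eq_mul]
  congr 2
  rw [Finset.filter_filter]
  exact fiber_card I hI

lemma final_scalar (s F P IC PC DI X Ng B1 B2 : ℂ) (hs : s * s = 1) (hIP : IC * PC = 1)
    (hF : F ≠ 0) (hB1 : B1 ≠ 0) (hDI : DI ≠ 0) (hX : X ≠ 0) (hP : P = B1 * B2) :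
    s * F⁻¹ * P * IC * (PC * (F * ((s * DI) * (Ng / (B1 * (DI * X)))))) = B2 * Ng / X := by
  subst hP
  field_simp
  linear_combination (B2 * Ng * IC * PC) * hs +
    (B2 * Ng) * hIP

lemma key_induction {m : ℕ} (A : Fin m → ℂ) (hA : Function.Injective A)
    {R : ℝ} (hR : 0 < R) (hAR : ∀ i, ‖A i‖ < R) {g : ℂ → ℂ}
    (hg : DiffContOnCl ℂ g (ball (0:ℂ) R)) :
    ∀ (c : ℕ), c ≤ m → ∀ (d : ℕ) (T : Fin d → ℂ),
    iteratedCircleIntegral c (fun w =>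
        (∏ i, ∏ j ∈ Finset.Ioi i, (w i - w j) ^ 2) *
          ∏ ℓ, (g (w ℓ) * (∏ t, (T t - w ℓ) ^ 2) / ∏ i, (w ℓ - A i))) R
      = (2 * Real.pi * Complex.I) ^ c *
        ∑ σ : Fin c → Fin m, (∏ i, ∏ j ∈ Finset.Ioi i, (A (σ i) - A (σ j)) ^ 2) *
          ∏ ℓ, (g (A (σ ℓ)) / (∏ i' ∈ Finset.univ.erase (σ ℓ), (A (σ ℓ) - A i')) *
            ∏ t, (T t - A (σ ℓ)) ^ 2)
  | 0, _, d, T => by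
      simp [iteratedCircleIntegral]
  | c + 1, hc, d, T => by
      have hm : 0 < m := Nat.lt_of_lt_of_le (Nat.succ_pos c) hc
      have hcm : c ≤ m := Nat.le_of_succ_le hc
      have hgc : ContinuousOn g (sphere (0:ℂ) R) := by
        refine hg.continuousOn.mono ?_
        rw [closure_ball (0:ℂ) hR.ne']
        exact sphere_subset_closedBall
      have hzA : ∀ z ∈ sphere (0:ℂ) R, ∀ i, z ≠ A i := by
        intro z hz i h
        rw [mem_sphere_zero_iff_norm] at hz
        rw [h] at hz
        exact (hAR i).ne (by simpa using hz)
      rw [iterated_succ]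
      have hinner : (fun z : ℂ => iteratedCircleIntegral c (fun w : Fin c → ℂ =>
            (∏ i : Fin (c+1), ∏ j ∈ Finset.Ioi i, (Fin.cons (α := fun _ => ℂ) z w i - Fin.cons (α := fun _ => ℂ) z w j) ^ 2) *
              ∏ ℓ : Fin (c+1), (g (Fin.cons (α := fun _ => ℂ) z w ℓ) * (∏ t, (T t - Fin.cons (α := fun _ => ℂ) z w ℓ) ^ 2) /
                ∏ i, (Fin.cons (α := fun _ => ℂ) z w ℓ - A i))) R)
          = fun z : ℂ => ∑ σ : Fin c → Fin m,
              ((2 * Real.pi * Complex.I) ^ c *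
                ((∏ i, ∏ j ∈ Finset.Ioi i, (A (σ i) - A (σ j)) ^ 2) *
                  ∏ ℓ, (g (A (σ ℓ)) / (∏ i' ∈ Finset.univ.erase (σ ℓ), (A (σ ℓ) - A i')) *
                    ∏ t, (T t - A (σ ℓ)) ^ 2))) *
              ((g z * (∏ t, (T t - z) ^ 2) * ∏ ℓ : Fin c, (z - A (σ ℓ)) ^ 2) /
                ∏ i, (z - A i)) := by
        funext z
        have h1 : (fun w : Fin c → ℂ =>
            (∏ i : Fin (c+1), ∏ j ∈ Finset.Ioi i, (Fin.cons (α := fun _ => ℂ) z w i - Fin.cons (α := fun _ => ℂ) z w j) ^ 2) *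
              ∏ ℓ : Fin (c+1), (g (Fin.cons (α := fun _ => ℂ) z w ℓ) * (∏ t, (T t - Fin.cons (α := fun _ => ℂ) z w ℓ) ^ 2) /
                ∏ i, (Fin.cons (α := fun _ => ℂ) z w ℓ - A i)))
            = fun w => (g z * (∏ t, (T t - z) ^ 2) / ∏ i, (z - A i)) *
                ((∏ i, ∏ j ∈ Finset.Ioi i, (w i - w j) ^ 2) *
                  ∏ ℓ, (g (w ℓ) * (∏ t, (Fin.cons z T t - w ℓ) ^ 2) / ∏ i, (w ℓ - A i))) := by
          funext w
          rw [pair_cons (Fin.cons z w)]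
          simp only [Fin.cons_zero, Fin.cons_succ, Fin.prod_univ_succ, div_eq_mul_inv,
            mul_inv, Finset.prod_mul_distrib, Finset.prod_inv_distrib]
          ring
        rw [h1, iterated_const_mul, key_induction A hA hR hAR hg c hcm (d+1) (Fin.cons z T)]
        rw [Finset.mul_sum, Finset.mul_sum]
        refine Finset.sum_congr rfl fun σ _ => ?_
        simp only [Fin.prod_univ_succ, Fin.cons_zero, Fin.cons_succ, div_eq_mul_inv,
          mul_inv, Finset.prod_mul_distrib, Finset.prod_inv_distrib]
        ring
      rw [hinner]
      have hcontpoly : ∀ (k : ℕ) (B : Fin k → ℂ), Continuous (fun z : ℂ => ∏ t, (B t - z) ^ 2) :=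
        fun k B => continuous_finset_prod _ fun t _ =>
          (continuous_const.sub continuous_id).pow 2
      have hcontpoly' : ∀ (k : ℕ) (B : Fin k → ℂ), Continuous (fun z : ℂ => ∏ t, (z - B t) ^ 2) :=
        fun k B => continuous_finset_prod _ fun t _ =>
          (continuous_id.sub continuous_const).pow 2
      have hint : ∀ σ : Fin c → Fin m, CircleIntegrable (fun z : ℂ =>
          ((2 * Real.pi * Complex.I) ^ c *
            ((∏ i, ∏ j ∈ Finset.Ioi i, (A (σ i) - A (σ j)) ^ 2) *
              ∏ ℓ, (g (A (σ ℓ)) / (∏ i' ∈ Finset.univ.erase (σ ℓ), (A (σ ℓ) - A i')) *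
                ∏ t, (T t - A (σ ℓ)) ^ 2))) *
          ((g z * (∏ t, (T t - z) ^ 2) * ∏ ℓ : Fin c, (z - A (σ ℓ)) ^ 2) /
            ∏ i, (z - A i))) 0 R := by
        intro σ
        apply ContinuousOn.circleIntegrable hR.le
        apply continuousOn_const.mul
        apply ContinuousOn.div
        · exact (hgc.mul (hcontpoly d T).continuousOn).mul
            (hcontpoly' c (fun ℓ => A (σ ℓ))).continuousOn
        · exact Continuous.continuousOn (continuous_finset_prod _ fun i _ =>
            continuous_id.sub continuous_const)
        · intro z hz
          exact Finset.prod_ne_zero_iff.mpr fun i _ => sub_ne_zero.mpr (hzA z hz i)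
      rw [circleIntegral_finset_sum _ _ (fun σ _ => hint σ)]
      have hG : ∀ σ : Fin c → Fin m, DiffContOnCl ℂ
          (fun z => g z * (∏ t, (T t - z) ^ 2) * ∏ ℓ : Fin c, (z - A (σ ℓ)) ^ 2)
          (ball (0:ℂ) R) := fun σ =>
        diffContOnCl_mul (diffContOnCl_mul hg
          (Differentiable.diffContOnCl (Differentiable.fun_finset_prod fun t _ =>
            ((differentiable_const _).sub differentiable_id).pow 2)))
          (Differentiable.diffContOnCl (Differentiable.fun_finset_prod fun ℓ _ =>
            (differentiable_id.sub (differentiable_const _)).pow 2))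
      have heval : ∀ σ : Fin c → Fin m, (∮ z in C(0, R),
          ((2 * Real.pi * Complex.I) ^ c *
            ((∏ i, ∏ j ∈ Finset.Ioi i, (A (σ i) - A (σ j)) ^ 2) *
              ∏ ℓ, (g (A (σ ℓ)) / (∏ i' ∈ Finset.univ.erase (σ ℓ), (A (σ ℓ) - A i')) *
                ∏ t, (T t - A (σ ℓ)) ^ 2))) *
          ((g z * (∏ t, (T t - z) ^ 2) * ∏ ℓ : Fin c, (z - A (σ ℓ)) ^ 2) /
            ∏ i, (z - A i)))
          = ((2 * Real.pi * Complex.I) ^ c *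
            ((∏ i, ∏ j ∈ Finset.Ioi i, (A (σ i) - A (σ j)) ^ 2) *
              ∏ ℓ, (g (A (σ ℓ)) / (∏ i' ∈ Finset.univ.erase (σ ℓ), (A (σ ℓ) - A i')) *
                ∏ t, (T t - A (σ ℓ)) ^ 2))) *
            ((2 * Real.pi * Complex.I) * ∑ i, (g (A i) * (∏ t, (T t - A i) ^ 2) *
              ∏ ℓ : Fin c, (A i - A (σ ℓ)) ^ 2) /
                ∏ i' ∈ Finset.univ.erase i, (A i - A i')) := by
        intro σ
        rw [circleIntegral.integral_const_mul,
          circleIntegral_div_prod hm A hA hR hAR (hG σ)]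
      simp only [heval]
      have hsplit : (∑ σ : Fin (c+1) → Fin m,
          (∏ p, ∏ q ∈ Finset.Ioi p, (A (σ p) - A (σ q)) ^ 2) *
            ∏ ℓ, (g (A (σ ℓ)) / (∏ i' ∈ Finset.univ.erase (σ ℓ), (A (σ ℓ) - A i')) *
              ∏ t, (T t - A (σ ℓ)) ^ 2))
          = ∑ i : Fin m, ∑ σ : Fin c → Fin m,
            ((∏ p, ∏ q ∈ Finset.Ioi p,
                (A (Fin.cons (α := fun _ => Fin m) i σ p) -
                  A (Fin.cons (α := fun _ => Fin m) i σ q)) ^ 2) *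
              ∏ ℓ, (g (A (Fin.cons (α := fun _ => Fin m) i σ ℓ)) /
                (∏ i' ∈ Finset.univ.erase (Fin.cons (α := fun _ => Fin m) i σ ℓ),
                  (A (Fin.cons (α := fun _ => Fin m) i σ ℓ) - A i')) *
                ∏ t, (T t - A (Fin.cons (α := fun _ => Fin m) i σ ℓ)) ^ 2)) := by
        rw [← Equiv.sum_comp (Fin.consEquiv fun _ => Fin m), Fintype.sum_prod_type]
        rfl
      rw [hsplit, Finset.mul_sum]
      simp only [Finset.mul_sum]
      rw [Finset.sum_comm]
      refine Finset.sum_congr rfl fun i _ => ?_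
      refine Finset.sum_congr rfl fun σ _ => ?_
      rw [pair_cons (fun p => A (Fin.cons (α := fun _ => Fin m) i σ p))]
      simp only [Fin.cons_zero, Fin.cons_succ, Fin.prod_univ_succ, pow_succ,
        div_eq_mul_inv, mul_inv, Finset.prod_mul_distrib, Finset.prod_inv_distrib]
      ring

end PhiContourAux

open PhiContourAux Finset Complex Metric in
/-- The multiple-contour-integral representation, Eq. (2.7) of the paper (with the sign
fixed by the explicit definition of `Phi`): the contours are circles of radius `R`
enclosing all the poles `α_i` but none of the `β_j`. -/
theorem Phi_contour_integral (a b c : ℕ)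
    (α : Fin (b + c) → ℂ) (β : Fin (a + c) → ℂ) (γ : Fin (a + b) → ℂ)
    (hα : Function.Injective α) (R : ℝ) (hR : 0 < R)
    (hαR : ∀ i, ‖α i‖ < R) (hβR : ∀ j, R < ‖β j‖) :
    Phi a b c α β γ =
      (-1) ^ (c * (c - 1) / 2) * ((c.factorial : ℂ))⁻¹ *
        (∏ i, ∏ j, (α i - β j)) * ((2 * Real.pi * Complex.I)⁻¹) ^ c *
        iteratedCircleIntegral c
          (fun z =>
            (∏ p ∈ Finset.univ.filter (fun p : Fin c × Fin c => p.1 < p.2),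
                (z p.1 - z p.2) ^ 2) *
              ∏ ℓ, (∏ k, (z ℓ - γ k)) /
                ((∏ j, (z ℓ - β j)) * ∏ i, (z ℓ - α i))) R := by
  classical
  have h2pi : (2 * (Real.pi : ℂ) * Complex.I) ≠ 0 := by
    simp [Real.pi_ne_zero, Complex.I_ne_zero, Complex.ofReal_ne_zero]
  set g : ℂ → ℂ := fun z => (∏ k, (z - γ k)) / (∏ j, (z - β j)) with hgdef
  have hβne : ∀ z : ℂ, ‖z‖ ≤ R → (∏ j, (z - β j)) ≠ 0 := by
    intro z hz
    refine Finset.prod_ne_zero_iff.mpr fun j _ => sub_ne_zero.mpr fun h => ?_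
    rw [h] at hz
    exact absurd (lt_of_lt_of_le (hβR j) hz) (lt_irrefl R)
  have hg : DiffContOnCl ℂ g (ball (0:ℂ) R) := by
    constructor
    · intro z hz
      have hz' : ‖z‖ ≤ R := le_of_lt (by simpa [mem_ball_zero_iff] using hz)
      exact (DifferentiableAt.div
        ((Differentiable.fun_finset_prod fun k _ => differentiable_id.sub (differentiable_const _)) z)
        ((Differentiable.fun_finset_prod fun j _ => differentiable_id.sub (differentiable_const _)) z)
        (hβne z hz')).differentiableWithinAt
    · rw [closure_ball (0:ℂ) hR.ne']
      refine ContinuousOn.div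
        (Continuous.continuousOn (continuous_finset_prod _ fun k _ =>
          continuous_id.sub continuous_const))
        (Continuous.continuousOn (continuous_finset_prod _ fun j _ =>
          continuous_id.sub continuous_const)) ?_
      intro z hz
      exact hβne z (by simpa [mem_closedBall_zero_iff] using hz)
  have hfun : (fun z : Fin c → ℂ =>
      (∏ p ∈ Finset.univ.filter (fun p : Fin c × Fin c => p.1 < p.2), (z p.1 - z p.2) ^ 2) *
        ∏ ℓ, (∏ k, (z ℓ - γ k)) / ((∏ j, (z ℓ - β j)) * ∏ i, (z ℓ - α i)))
      = fun w : Fin c → ℂ => (∏ i, ∏ j ∈ Finset.Ioi i, (w i - w j) ^ 2) *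
          ∏ ℓ, (g (w ℓ) * (∏ t : Fin 0, ((![] : Fin 0 → ℂ) t - w ℓ) ^ 2) /
            ∏ i, (w ℓ - α i)) := by
    funext w
    rw [filter_pair_prod (fun i j => (w i - w j) ^ 2)]
    refine congrArg _ (Finset.prod_congr rfl fun ℓ _ => ?_)
    simp only [hgdef, Fin.prod_univ_zero, mul_one, div_div]
  rw [hfun]
  have hkey := key_induction α hα hR hαR hg c (Nat.le_add_left c b) 0 ![]
  rw [hkey]
  simp only [Fin.prod_univ_zero, mul_one]
  have hsum := sum_inj c α hα
    (fun i => g (α i) / ∏ i' ∈ Finset.univ.erase i, (α i - α i'))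
  rw [hsum]
  simp only [Finset.mul_sum]
  rw [Phi]
  refine Finset.sum_congr rfl fun I hI => ?_
  rw [Finset.mem_powersetCard_univ] at hI
  -- nonzero facts
  have hB1 : (∏ i ∈ I, ∏ j, (α i - β j)) ≠ 0 :=
    Finset.prod_ne_zero_iff.mpr fun i _ => Finset.prod_ne_zero_iff.mpr fun j _ =>
      sub_ne_zero.mpr fun h => ((hαR i).trans (hβR j)).ne (congrArg (‖·‖) h)
  have hDI : (∏ i ∈ I, ∏ j ∈ I.erase i, (α i - α j)) ≠ 0 :=
    Finset.prod_ne_zero_iff.mpr fun i _ => Finset.prod_ne_zero_iff.mpr fun j hj =>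
      sub_ne_zero.mpr fun h => (Finset.mem_erase.mp hj).1 (hα h.symm)
  have hX : (∏ i ∈ I, ∏ j ∈ Iᶜ, (α i - α j)) ≠ 0 :=
    Finset.prod_ne_zero_iff.mpr fun i hi => Finset.prod_ne_zero_iff.mpr fun j hj =>
      sub_ne_zero.mpr fun h => (Finset.mem_compl.mp hj) (hα h.symm ▸ hi)
  have hF : ((c.factorial : ℂ)) ≠ 0 := Nat.cast_ne_zero.mpr c.factorial_ne_zero
  have hs : ((-1 : ℂ)) ^ (c * (c - 1) / 2) * ((-1 : ℂ)) ^ (c * (c - 1) / 2) = 1 := by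
    rw [← pow_add]
    exact Even.neg_one_pow ⟨c * (c - 1) / 2, rfl⟩
  have hIP : ((2 * (Real.pi : ℂ) * Complex.I)⁻¹) ^ c * (2 * (Real.pi : ℂ) * Complex.I) ^ c
      = 1 := by
    rw [← mul_pow, inv_mul_cancel₀ h2pi, one_pow]
  have hEsplit : ∀ i ∈ I, (∏ i' ∈ Finset.univ.erase i, (α i - α i'))
      = (∏ j ∈ I.erase i, (α i - α j)) * ∏ j ∈ Iᶜ, (α i - α j) := by
    intro i hi
    rw [← Finset.prod_union (Finset.disjoint_left.mpr fun j hj hj' =>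
      (Finset.mem_compl.mp hj') (Finset.mem_of_mem_erase hj))]
    apply Finset.prod_congr _ fun _ _ => rfl
    ext j
    simp only [Finset.mem_erase, Finset.mem_univ, and_true, Finset.mem_union,
      Finset.mem_compl]
    constructor
    · intro hj
      by_cases hjI : j ∈ I
      · exact Or.inl ⟨hj, hjI⟩
      · exact Or.inr hjI
    · rintro (⟨hj, _⟩ | hj)
      · exact hj
      · exact fun h => hj (h ▸ hi)
  have hprodres : (∏ i ∈ I, (g (α i) / ∏ i' ∈ Finset.univ.erase i, (α i - α i')))
      = (∏ i ∈ I, ∏ k, (α i - γ k)) /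
          ((∏ i ∈ I, ∏ j, (α i - β j)) *
            ((∏ i ∈ I, ∏ j ∈ I.erase i, (α i - α j)) * ∏ i ∈ I, ∏ j ∈ Iᶜ, (α i - α j))) := by
    have hstep : ∀ i ∈ I, g (α i) / ∏ i' ∈ Finset.univ.erase i, (α i - α i')
        = (∏ k, (α i - γ k)) / ((∏ j, (α i - β j)) *
            ((∏ j ∈ I.erase i, (α i - α j)) * ∏ j ∈ Iᶜ, (α i - α j))) := by
      intro i hi
      have : g (α i) = (∏ k, (α i - γ k)) / (∏ j, (α i - β j)) := rfl
      rw [this, div_div, hEsplit i hi]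
    calc (∏ i ∈ I, (g (α i) / ∏ i' ∈ Finset.univ.erase i, (α i - α i')))
        = ∏ i ∈ I, ((∏ k, (α i - γ k)) / ((∏ j, (α i - β j)) *
            ((∏ j ∈ I.erase i, (α i - α j)) * ∏ j ∈ Iᶜ, (α i - α j)))) :=
          Finset.prod_congr rfl hstep
      _ = _ := by
          rw [Finset.prod_div_distrib, Finset.prod_mul_distrib, Finset.prod_mul_distrib]
  rw [hprodres]
  exact (final_scalar _ _ _ _ _ _ _ _ _ _ hs hIP hF hB1 hDI hX
    (Finset.prod_mul_prod_compl I _).symm).symm
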